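/- arXiv:2202.03322 — 2 statements merged into one kernel-verified Lean document; each statement's English description precedes it below -/
import Mathlib

section
/- For any graph G and any set F of edges of G, contracting all edges of F decreases the minimum vertex cover number by at most the rank of F: vc(G/F) ≥ vc(G) − rank(V(F)), where rank(V(F)) is the number of vertices incident to F minus the number of connected components of the subgraph induced by those vertices. -/
open SimpleGraph

/-- A set of vertices is a vertex cover if it meets every edge. -/
def IsVertexCover {V : Type*} (G : SimpleGraph V) (C : Set V) : Prop :=
  ∀ ⦃u v : V⦄, G.Adj u v → u ∈ C ∨ v ∈ C

/-- The minimum vertex cover number of a graph. -/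
noncomputable def vc {V : Type*} (G : SimpleGraph V) : ℕ :=
  sInf {n | ∃ C : Set V, _root_.IsVertexCover G C ∧ C.Finite ∧ Nat.card C = n}

/-- `X` is a minimum vertex cover of `G`. -/
def IsMinVertexCover {V : Type*} (G : SimpleGraph V) (X : Set V) : Prop :=
  _root_.IsVertexCover G X ∧ ∀ C : Set V, _root_.IsVertexCover G C → Nat.card X ≤ Nat.card C

/-- The rank of a graph: number of vertices minus number of connected components. -/
noncomputable def grank {V : Type*} (G : SimpleGraph V) : ℕ :=
  Nat.card V - Nat.card G.ConnectedComponent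

/-- The rank of a set of vertices: the rank of the induced subgraph. -/
noncomputable def srank {V : Type*} (G : SimpleGraph V) (S : Set V) : ℕ :=
  grank (G.induce S)

/-- The set of endpoints of a set of edges. -/
def edgeVerts {V : Type*} (F : Set (Sym2 V)) : Set V := {v | ∃ e ∈ F, v ∈ e}

/-- The setoid identifying the vertices connected through edges of `F`. -/
def contractSetoid {V : Type*} (F : Set (Sym2 V)) : Setoid V :=
  (SimpleGraph.fromEdgeSet F).reachableSetoid

/-- The graph obtained from `G` by contracting all the edges in `F`. -/
def contract {V : Type*} (G : SimpleGraph V) (F : Set (Sym2 V)) :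
    SimpleGraph (Quotient (contractSetoid F)) where
  Adj a b := a ≠ b ∧ ∃ u v : V, Quotient.mk (contractSetoid F) u = a ∧
    Quotient.mk (contractSetoid F) v = b ∧ G.Adj u v
  symm := by
    constructor; rintro a b ⟨hab, u, v, hu, hv, h⟩
    exact ⟨hab.symm, v, u, hv, hu, h.symm⟩
  loopless := by constructor; rintro a ⟨h, -⟩; exact h rfl

lemma mem_edgeVerts_left {V : Type*} {F : Set (Sym2 V)} {u v : V}
    (h : (SimpleGraph.fromEdgeSet F).Adj u v) : u ∈ edgeVerts F :=
  ⟨s(u,v), h.1, Sym2.mem_mk_left u v⟩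

lemma eq_of_reachable_of_not_mem {V : Type*} {F : Set (Sym2 V)} {u v : V}
    (hu : u ∉ edgeVerts F) (h : (SimpleGraph.fromEdgeSet F).Reachable u v) : u = v := by
  obtain ⟨p⟩ := h
  cases p with
  | nil => rfl
  | cons h p => exact absurd (mem_edgeVerts_left h) hu

lemma contract_rel {V : Type*} {F : Set (Sym2 V)} {u v : V} :
    Quotient.mk (contractSetoid F) u = Quotient.mk (contractSetoid F) v ↔
      (SimpleGraph.fromEdgeSet F).Reachable u v := by
  rw [Quotient.eq]
  rfl

lemma mem_S_of_rel {V : Type*} {F : Set (Sym2 V)} {u v : V} (hu : u ∈ edgeVerts F)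
    (h : Quotient.mk (contractSetoid F) v = Quotient.mk (contractSetoid F) u) :
    v ∈ edgeVerts F := by
  by_contra hv
  exact hv (eq_of_reachable_of_not_mem hv (contract_rel.mp h) ▸ hu)

lemma induce_reachable_of_walk {V : Type*} {G : SimpleGraph V} {F : Set (Sym2 V)}
    (hF : F ⊆ G.edgeSet) {u v : V} (p : (SimpleGraph.fromEdgeSet F).Walk u v)
    (hu : u ∈ edgeVerts F) (hv : v ∈ edgeVerts F) :
    (G.induce (edgeVerts F)).Reachable ⟨u, hu⟩ ⟨v, hv⟩ := by
  induction p with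
  | nil => exact Reachable.refl _
  | @cons a b c h p ih =>
      have hb : b ∈ edgeVerts F := mem_edgeVerts_left h.symm
      have hadj : (G.induce (edgeVerts F)).Adj ⟨a, hu⟩ ⟨b, hb⟩ := by
        simpa using (G.mem_edgeSet.mp (hF h.1))
      exact hadj.reachable.trans (ih hb hv)

theorem stmt3 {V : Type*} [Fintype V] (G : SimpleGraph V) (F : Set (Sym2 V))
    (hF : F ⊆ G.edgeSet) :
    vc G ≤ vc (contract G F) + srank G (edgeVerts F) := by
  classical
  set S : Set V := edgeVerts F with hS
  set π : V → Quotient (contractSetoid F) := Quotient.mk (contractSetoid F) with hπ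
  -- a minimum vertex cover of the contraction
  have hne : {n | ∃ C, _root_.IsVertexCover (contract G F) C ∧ C.Finite ∧ Nat.card C = n}.Nonempty :=
    ⟨Nat.card (Set.univ : Set (Quotient (contractSetoid F))), Set.univ,
      fun u v _ => Or.inl trivial, Set.toFinite _, rfl⟩
  obtain ⟨C', hC'cov, -, hC'card⟩ : ∃ C', _root_.IsVertexCover (contract G F) C' ∧ C'.Finite ∧
      Nat.card C' = vc (contract G F) := Nat.sInf_mem hne
  set P : Set (Quotient (contractSetoid F)) := π '' S with hP
  -- the lifted cover
  set R : Set V := {v | v ∈ S ∧ π v ∉ C' ∧ v = (π v).out} with hR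
  set C : Set V := (S ∪ {v | π v ∈ C'}) \ R with hC
  have hCcov : _root_.IsVertexCover G C := by
    intro u v huv
    by_cases hq : π u = π v
    · have hune : u ≠ v := huv.ne
      have hreach : (SimpleGraph.fromEdgeSet F).Reachable u v := contract_rel.mp hq
      have huS : u ∈ S := by
        by_contra h; exact hune (eq_of_reachable_of_not_mem h hreach)
      have hvS : v ∈ S := by
        by_contra h; exact hune (eq_of_reachable_of_not_mem h hreach.symm).symm
      by_cases hc : π u ∈ C'
      · exact Or.inl ⟨Or.inl huS, fun hr => hr.2.1 hc⟩
      · by_cases hur : u ∈ R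
        · refine Or.inr ⟨Or.inl hvS, fun hvr => ?_⟩
          exact hune (hur.2.2.trans (by rw [hq, ← hvr.2.2]))
        · exact Or.inl ⟨Or.inl huS, hur⟩
    · have hadj : (contract G F).Adj (π u) (π v) := ⟨hq, u, v, rfl, rfl, huv⟩
      rcases hC'cov hadj with h | h
      · exact Or.inl ⟨Or.inr h, fun hr => hr.2.1 h⟩
      · exact Or.inr ⟨Or.inr h, fun hr => hr.2.1 h⟩
  -- vc G is at most the size of C
  have hvcG : vc G ≤ C.ncard := by
    apply Nat.sInf_le
    exact ⟨C, hCcov, Set.toFinite _, Nat.card_coe_set_eq C⟩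
  -- counting
  have hsplit : (C ∩ S).ncard + (C \ S).ncard = C.ncard :=
    Set.ncard_inter_add_ncard_diff_eq_ncard C S (Set.toFinite _)
  -- bound on C \ S
  have h1 : (C \ S).ncard ≤ (C' \ P).ncard := by
    apply Set.ncard_le_ncard_of_injOn π
    · rintro a ⟨ha, haS⟩
      have haC' : π a ∈ C' := by
        rcases ha.1 with h | h
        · exact absurd h haS
        · exact h
      refine ⟨haC', fun ⟨w, hwS, hw⟩ => haS (mem_S_of_rel hwS hw.symm)⟩
    · intro a ha b hb hab
      exact eq_of_reachable_of_not_mem ha.2 (contract_rel.mp hab)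
  have h1' : (C' ∩ P).ncard + (C' \ P).ncard = C'.ncard :=
    Set.ncard_inter_add_ncard_diff_eq_ncard C' P (Set.toFinite _)
  -- bound on C ∩ S
  have h2 : (C ∩ S).ncard + (P \ C').ncard ≤ S.ncard := by
    have houtS : ∀ q ∈ P, (Quotient.out q : V) ∈ S := by
      rintro q ⟨w, hwS, hw⟩
      exact mem_S_of_rel hwS ((Quotient.out_eq q).trans hw.symm)
    have hTsub : Quotient.out '' (P \ C') ⊆ S := by
      rintro x ⟨q, hq, rfl⟩; exact houtS q hq.1
    have hdisj : Disjoint (C ∩ S) (Quotient.out '' (P \ C')) := by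
      rw [Set.disjoint_right]
      rintro x ⟨q, hq, rfl⟩ ⟨hxC, hxS⟩
      exact hxC.2 ⟨hxS, by rw [show π q.out = q from Quotient.out_eq q]; exact hq.2,
        by rw [show π q.out = q from Quotient.out_eq q]⟩
    have hT : (Quotient.out '' (P \ C')).ncard = (P \ C').ncard :=
      Set.ncard_image_of_injective _ Quotient.out_injective
    calc (C ∩ S).ncard + (P \ C').ncard
        = ((C ∩ S) ∪ Quotient.out '' (P \ C')).ncard := by
          rw [Set.ncard_union_eq hdisj (Set.toFinite _) (Set.toFinite _), hT]
      _ ≤ S.ncard := Set.ncard_le_ncard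
          (Set.union_subset (Set.inter_subset_right) hTsub) (Set.toFinite _)
  have hP' : (P ∩ C').ncard + (P \ C').ncard = P.ncard :=
    Set.ncard_inter_add_ncard_diff_eq_ncard P C' (Set.toFinite _)
  -- number of components of the induced graph is at most |P|
  have hc : Nat.card (G.induce S).ConnectedComponent ≤ P.ncard := by
    rw [← Nat.card_coe_set_eq]
    have houtS : ∀ q ∈ P, (Quotient.out q : V) ∈ S := by
      rintro q ⟨w, hwS, hw⟩
      exact mem_S_of_rel hwS ((Quotient.out_eq q).trans hw.symm)
    apply Nat.card_le_card_of_surjective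
      (fun q : P => (G.induce S).connectedComponentMk ⟨Quotient.out q.1, houtS q.1 q.2⟩)
    intro comp
    obtain ⟨⟨v, hv⟩, rfl⟩ := comp.exists_rep
    refine ⟨⟨π v, v, hv, rfl⟩, ?_⟩
    apply SimpleGraph.ConnectedComponent.sound
    have : π (Quotient.out (π v)) = π v := Quotient.out_eq _
    obtain ⟨p⟩ := contract_rel.mp this
    exact induce_reachable_of_walk hF p _ hv
  -- wrap up
  have hsrank : srank G S = S.ncard - Nat.card (G.induce S).ConnectedComponent := by
    rw [srank, grank, Nat.card_coe_set_eq]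
  rw [← hC'card, Nat.card_coe_set_eq, hsrank]
  have hPC' : P ∩ C' = C' ∩ P := Set.inter_comm _ _
  rw [hPC'] at hP'
  omega
end

section
/- Let G be a graph whose vertex set is partitioned into cliques V_1,…,V_q, and let G' be obtained from G by adding a universal vertex α and q+1 pendant vertices adjacent to α. Then G has an independent set containing exactly one vertex from each V_i if and only if G' contains a set F of at least 2q+1 edges such that the subgraph of G' induced on the endpoints of F is a forest. -/
open SimpleGraph

/-- The graph `G'` of the W[1]-hardness reduction: `G` plus a universal vertex `α`
(the `Sum.inr (Sum.inl ())` vertex) and `q + 1` pendant vertices adjacent only to `α`. -/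
def Gp {V : Type*} (G : SimpleGraph V) (q : ℕ) :
    SimpleGraph (V ⊕ (Unit ⊕ Fin (q + 1))) :=
  SimpleGraph.fromRel (fun a b =>
    match a, b with
    | .inl u, .inl v => G.Adj u v
    | .inl _, .inr (.inl _) => True
    | .inr (.inl _), .inr (.inr _) => True
    | _, _ => False)


universe u


lemma star_isAcyclic {V : Type*} {G : SimpleGraph V} (a : V)
    (h : ∀ ⦃u v⦄, G.Adj u v → u = a ∨ v = a) : G.IsAcyclic := by
  intro v c hc
  have h3 := hc.three_le_length
  cases c with
  | nil => simp at h3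
  | @cons _ u _ hadj q =>
    have hq : q.IsPath := ((Walk.cons_isCycle_iff q hadj).mp hc).1
    rcases h hadj with rfl | rfl
    · -- v = a
      cases q with
      | nil => exact hadj.ne rfl
      | @cons _ w _ h2 q2 =>
        rcases h h2 with rfl | rfl
        · exact hadj.ne rfl
        · have : q2 = Walk.nil := Walk.isPath_iff_eq_nil.mp hq.of_cons
          subst this
          simp [Walk.length_cons] at h3
    · -- u = a
      cases q with
      | nil => exact hadj.ne rfl
      | @cons _ w _ h2 q2 =>
        obtain ⟨hq2, hna⟩ := (Walk.cons_isPath_iff h2 q2).mp hq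
        cases q2 with
        | nil => simp [Walk.length_cons] at h3
        | @cons _ x _ h4 q4 =>
          rcases h h4 with rfl | rfl
          · exact hna (Walk.start_mem_support _)
          · exact hna (by rw [Walk.support_cons]; exact List.mem_cons_of_mem _ (Walk.start_mem_support _))


lemma isAcyclic_induce {V : Type*} {G : SimpleGraph V} (h : G.IsAcyclic) (s : Set V) :
    (G.induce s).IsAcyclic := by
  intro v c hc
  exact h (c.map (Embedding.induce (G := G) s).toHom)
    (hc.map (Embedding.induce (G := G) s).injective)

lemma not_isAcyclic_of_triangle {V : Type*} {G : SimpleGraph V} {u v w : V}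
    (huv : G.Adj u v) (hvw : G.Adj v w) (huw : G.Adj u w) : ¬ G.IsAcyclic := by
  intro hac
  have hb := isAcyclic_iff_forall_adj_isBridge.mp hac huv
  rw [isBridge_iff] at hb
  refine hb (reachable_delete_edges_iff_exists_walk.mpr
    ⟨Walk.cons huw (Walk.cons hvw.symm Walk.nil), ?_⟩)
  have h1 : v ≠ w := hvw.ne
  have h2 : u ≠ w := huw.ne
  have h3 : u ≠ v := huv.ne
  simp only [Walk.edges_cons, Walk.edges_nil, List.mem_cons, List.not_mem_nil, or_false]
  rintro (h | h) <;> rw [Sym2.eq_iff] at h <;> tauto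

lemma forest_bound : ∀ (n : ℕ) (V : Type u) [Fintype V] [Nonempty V]
    (G : SimpleGraph V) [DecidableRel G.Adj], Fintype.card V = n → G.IsAcyclic →
    G.edgeFinset.card + 1 ≤ n := by
  intro n
  induction n using Nat.strong_induction_on with
  | _ n ih =>
  intro V _ _ G _ hn hac
  classical
  by_cases hpre : G.Preconnected
  · have htree : G.IsTree := ⟨(connected_iff G).mpr ⟨hpre, ‹_›⟩, hac⟩
    rw [← hn]
    exact le_of_eq htree.card_edgeFinset
  · rw [Preconnected] at hpre
    push_neg at hpre
    obtain ⟨u, v, huv⟩ := hpre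
    set S : Set V := {x | G.Reachable u x} with hSdef
    have hScl : ∀ ⦃x y : V⦄, x ∈ S → G.Adj x y → y ∈ S :=
      fun x y hx hxy => hx.trans hxy.reachable
    have hSccl : ∀ ⦃x y : V⦄, x ∈ Sᶜ → G.Adj x y → y ∈ Sᶜ := by
      intro x y hx hxy hy
      exact hx (hScl hy hxy.symm)
    haveI : Nonempty ↥S := ⟨⟨u, Reachable.refl u⟩⟩
    haveI : Nonempty ↥(Sᶜ) := ⟨⟨v, huv⟩⟩
    have hcards : Fintype.card ↥S + Fintype.card ↥(Sᶜ) = n := by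
      have h1 : Fintype.card ↥(Sᶜ) = Fintype.card V - Fintype.card ↥S := by
        exact Fintype.card_compl_set S
      have h2 : Fintype.card ↥S ≤ Fintype.card V := Fintype.card_subtype_le _
      omega
    have hlt1 : Fintype.card ↥S < n := by
      rw [← hn]
      exact Fintype.card_subtype_lt (x := v) huv
    have hlt2 : Fintype.card ↥(Sᶜ) < n := by
      rw [← hn]
      exact Fintype.card_subtype_lt (x := u) (by simp [hSdef])
    have h1 := ih _ hlt1 ↥S (G.induce S) rfl (isAcyclic_induce hac S)
    have h2 := ih _ hlt2 ↥(Sᶜ) (G.induce Sᶜ) rfl (isAcyclic_induce hac Sᶜ)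
    have hsub : G.edgeFinset ⊆
        ((G.induce S).edgeFinset.image (Sym2.map (Subtype.val))) ∪
        ((G.induce Sᶜ).edgeFinset.image (Sym2.map (Subtype.val))) := by
      intro e he
      rw [mem_edgeFinset] at he
      induction e with
      | _ a b =>
        rw [mem_edgeSet] at he
        rw [Finset.mem_union]
        by_cases ha : a ∈ S
        · left
          have hb : b ∈ S := hScl ha he
          rw [Finset.mem_image]
          exact ⟨s((⟨a, ha⟩ : S), (⟨b, hb⟩ : S)), by simp [mem_edgeFinset, he],
            by rw [Sym2.map_pair_eq]⟩
        · right
          have hb : b ∈ Sᶜ := hSccl ha he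
          rw [Finset.mem_image]
          exact ⟨s((⟨a, ha⟩ : ↥(Sᶜ)), (⟨b, hb⟩ : ↥(Sᶜ))), by simp [mem_edgeFinset, he],
            by rw [Sym2.map_pair_eq]⟩
    have hcle := Finset.card_le_card hsub
    have hcle2 := Finset.card_union_le
      ((G.induce S).edgeFinset.image (Sym2.map (Subtype.val)))
      ((G.induce Sᶜ).edgeFinset.image (Sym2.map (Subtype.val)))
    have hi1 := Finset.card_image_le (s := (G.induce S).edgeFinset)
      (f := Sym2.map (Subtype.val))
    have hi2 := Finset.card_image_le (s := (G.induce Sᶜ).edgeFinset)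
      (f := Sym2.map (Subtype.val))
    omega

lemma card_edge_bound {W : Type u} [Fintype W] {H : SimpleGraph W} {F : Set (Sym2 W)}
    (hFE : F ⊆ H.edgeSet) (hne : F.Nonempty)
    (hac : (H.induce (edgeVerts F)).IsAcyclic) :
    Nat.card F + 1 ≤ Nat.card (edgeVerts F) := by
  classical
  set S : Set W := edgeVerts F with hS
  obtain ⟨e0, he0⟩ := hne
  haveI : Nonempty ↥S := by
    refine ⟨⟨e0.out.1, ⟨e0, he0, ?_⟩⟩⟩
    exact Sym2.out_fst_mem e0
  have hsub : F.toFinset ⊆ (H.induce S).edgeFinset.image (Sym2.map (Subtype.val)) := by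
    intro e he
    rw [Set.mem_toFinset] at he
    have hadj := hFE he
    induction e with
    | _ a b =>
      rw [mem_edgeSet] at hadj
      have ha : a ∈ S := ⟨s(a, b), he, by simp⟩
      have hb : b ∈ S := ⟨s(a, b), he, by simp⟩
      rw [Finset.mem_image]
      exact ⟨s((⟨a, ha⟩ : S), (⟨b, hb⟩ : S)), by simp [mem_edgeFinset, hadj],
        by rw [Sym2.map_pair_eq]⟩
  have hle1 : F.toFinset.card ≤ (H.induce S).edgeFinset.card :=
    le_trans (Finset.card_le_card hsub) Finset.card_image_le
  have hle2 := forest_bound (Fintype.card ↥S) ↥S (H.induce S) rfl hac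
  have hF : Nat.card F = F.toFinset.card := by
    rw [Nat.card_coe_set_eq, Set.ncard_eq_toFinset_card']
  have hScard : Nat.card S = Fintype.card ↥S := Nat.card_eq_fintype_card
  omega

section GpLemmas
variable {V : Type*} {G : SimpleGraph V} {q : ℕ}

lemma gp_adj_inl_inl {u v : V} : (Gp G q).Adj (.inl u) (.inl v) ↔ G.Adj u v := by
  simp only [Gp, fromRel_adj]
  constructor
  · rintro ⟨h, h2 | h2⟩
    · exact h2
    · exact h2.symm
  · intro h
    exact ⟨by simp [h.ne], Or.inl h⟩

lemma gp_adj_inl_alpha (u : V) : (Gp G q).Adj (.inl u) (.inr (.inl ())) := by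
  simp only [Gp, fromRel_adj]
  exact ⟨by simp, Or.inl trivial⟩

lemma gp_adj_alpha_pend (i : Fin (q + 1)) :
    (Gp G q).Adj (.inr (.inl ())) (.inr (.inr i)) := by
  simp only [Gp, fromRel_adj]
  exact ⟨by simp, Or.inl trivial⟩

lemma gp_adj_pend {i : Fin (q + 1)} {x : V ⊕ (Unit ⊕ Fin (q + 1))}
    (h : (Gp G q).Adj (.inr (.inr i)) x) : x = .inr (.inl ()) := by
  simp only [Gp, fromRel_adj] at h
  obtain ⟨hne, h | h⟩ := h
  · cases x with
    | inl v => exact absurd h (by simp)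
    | inr y => cases y with
      | inl u => rfl
      | inr j => exact absurd h (by simp)
  · cases x with
    | inl v => exact absurd h (by simp)
    | inr y => cases y with
      | inl u => rfl
      | inr j => exact absurd h (by simp)

lemma gp_not_adj_inl_pend (u : V) (i : Fin (q + 1)) :
    ¬ (Gp G q).Adj (.inl u) (.inr (.inr i)) := by
  intro h
  exact absurd (gp_adj_pend h.symm) (by simp)

end GpLemmas

lemma aux_fwd {V : Type*} [Fintype V] (G : SimpleGraph V) (q : ℕ)
    (P : V → Fin q) (f : Fin q → V) (hP : ∀ i, P (f i) = i)
    (hind : ∀ i j, i ≠ j → ¬ G.Adj (f i) (f j)) :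
    ∃ F : Set (Sym2 (V ⊕ (Unit ⊕ Fin (q + 1)))), F ⊆ (Gp G q).edgeSet ∧
      2 * q + 1 ≤ Nat.card F ∧ ((Gp G q).induce (edgeVerts F)).IsAcyclic := by
  classical
  have hfinj : Function.Injective f := fun i j h => by rw [← hP i, ← hP j, h]
  let α : V ⊕ (Unit ⊕ Fin (q + 1)) := Sum.inr (Sum.inl ())
  let pend : Fin (q + 1) → V ⊕ (Unit ⊕ Fin (q + 1)) := fun i => Sum.inr (Sum.inr i)
  let E1 : Finset (Sym2 (V ⊕ (Unit ⊕ Fin (q + 1)))) :=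
    Finset.univ.image (fun i : Fin (q + 1) => s(α, pend i))
  let E2 : Finset (Sym2 (V ⊕ (Unit ⊕ Fin (q + 1)))) :=
    Finset.univ.image (fun i : Fin q => s(α, Sum.inl (f i)))
  refine ⟨↑(E1 ∪ E2), ?_, ?_, ?_⟩
  · intro e he
    rw [Finset.coe_union, Set.mem_union] at he
    rcases he with he | he
    · rw [Finset.mem_coe, Finset.mem_image] at he
      obtain ⟨i, -, rfl⟩ := he
      exact (gp_adj_alpha_pend (G := G) i)
    · rw [Finset.mem_coe, Finset.mem_image] at he
      obtain ⟨i, -, rfl⟩ := he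
      exact (gp_adj_inl_alpha (G := G) (f i)).symm
  · have hdisj : Disjoint E1 E2 := by
      rw [Finset.disjoint_left]
      rintro e he1 he2
      rw [Finset.mem_image] at he1 he2
      obtain ⟨i, -, rfl⟩ := he1
      obtain ⟨j, -, hj⟩ := he2
      have := Sym2.congr_right.mp hj
      simp [pend] at this
    have hc1 : E1.card = q + 1 := by
      rw [Finset.card_image_of_injective _ ?_, Finset.card_univ, Fintype.card_fin]
      intro i j h
      have := Sym2.congr_right.mp h
      simpa [pend] using this
    have hc2 : E2.card = q := by
      rw [Finset.card_image_of_injective _ ?_, Finset.card_univ, Fintype.card_fin]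
      intro i j h
      have := Sym2.congr_right.mp h
      exact hfinj (by simpa using this)
    rw [Nat.card_coe_set_eq, Set.ncard_coe_finset,
      Finset.card_union_of_disjoint hdisj, hc1, hc2]
    omega
  · set S := edgeVerts (↑(E1 ∪ E2) : Set (Sym2 (V ⊕ (Unit ⊕ Fin (q + 1))))) with hSdef
    have hSchar : ∀ x : V ⊕ (Unit ⊕ Fin (q + 1)), x ∈ S ↔
        x = α ∨ (∃ i, x = pend i) ∨ (∃ i, x = Sum.inl (f i)) := by
      intro x
      constructor
      · rintro ⟨e, he, hx⟩
        rw [Finset.mem_coe, Finset.mem_union] at he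
        rcases he with he | he <;> rw [Finset.mem_image] at he
        · obtain ⟨i, -, rfl⟩ := he
          rw [Sym2.mem_iff] at hx
          rcases hx with rfl | rfl
          · exact Or.inl rfl
          · exact Or.inr (Or.inl ⟨i, rfl⟩)
        · obtain ⟨i, -, rfl⟩ := he
          rw [Sym2.mem_iff] at hx
          rcases hx with rfl | rfl
          · exact Or.inl rfl
          · exact Or.inr (Or.inr ⟨i, rfl⟩)
      · rintro (rfl | ⟨i, rfl⟩ | ⟨i, rfl⟩)
        · exact ⟨s(α, pend 0), by
            rw [Finset.mem_coe, Finset.mem_union]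
            exact Or.inl (Finset.mem_image_of_mem _ (Finset.mem_univ 0)), by simp⟩
        · exact ⟨s(α, pend i), by
            rw [Finset.mem_coe, Finset.mem_union]
            exact Or.inl (Finset.mem_image_of_mem _ (Finset.mem_univ i)), by simp⟩
        · exact ⟨s(α, Sum.inl (f i)), by
            rw [Finset.mem_coe, Finset.mem_union]
            exact Or.inr (Finset.mem_image_of_mem _ (Finset.mem_univ i)), by simp⟩
    have hαS : α ∈ S := (hSchar α).mpr (Or.inl rfl)
    apply star_isAcyclic (⟨α, hαS⟩ : ↥S)
    rintro ⟨x, hx⟩ ⟨y, hy⟩ hadj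
    have hadj' : (Gp G q).Adj x y := hadj
    rcases (hSchar x).mp hx with rfl | ⟨i, rfl⟩ | ⟨i, rfl⟩
    · exact Or.inl rfl
    · exact Or.inr (Subtype.ext (gp_adj_pend hadj'))
    · rcases (hSchar y).mp hy with rfl | ⟨j, rfl⟩ | ⟨j, rfl⟩
      · exact Or.inr rfl
      · exact absurd hadj' (gp_not_adj_inl_pend _ _)
      · exfalso
        have hG : G.Adj (f i) (f j) := gp_adj_inl_inl.mp hadj'
        rcases eq_or_ne i j with rfl | hij
        · exact hG.ne rfl
        · exact hind i j hij hG

lemma aux_bwd {V : Type*} [Fintype V] (G : SimpleGraph V) (q : ℕ)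
    (P : V → Fin q) (hclique : ∀ u v : V, P u = P v → u ≠ v → G.Adj u v)
    (F : Set (Sym2 (V ⊕ (Unit ⊕ Fin (q + 1))))) (hFE : F ⊆ (Gp G q).edgeSet)
    (hcard : 2 * q + 1 ≤ Nat.card F)
    (hac : ((Gp G q).induce (edgeVerts F)).IsAcyclic) :
    ∃ f : Fin q → V, (∀ i, P (f i) = i) ∧
      ∀ i j, i ≠ j → ¬ G.Adj (f i) (f j) := by
  classical
  set S := edgeVerts F with hSdef
  have hne : F.Nonempty := by
    rcases Set.eq_empty_or_nonempty F with rfl | h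
    · rw [Nat.card_coe_set_eq, Set.ncard_empty] at hcard; omega
    · exact h
  have hbound := card_edge_bound hFE hne hac
  rw [← hSdef] at hbound
  have hS2 : 2 * q + 2 ≤ Nat.card S := by omega
  set α : V ⊕ (Unit ⊕ Fin (q + 1)) := Sum.inr (Sum.inl ()) with hαdef
  set T : Set V := {v | Sum.inl v ∈ S} with hTdef
  -- S is covered by inl '' T, {α}, and the pendants
  have hcover : S ⊆ (Sum.inl '' T) ∪ ({α} ∪ (Set.range (fun i : Fin (q + 1) =>
      (Sum.inr (Sum.inr i) : V ⊕ (Unit ⊕ Fin (q + 1)))))) := by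
    rintro (v | u | i) hx
    · exact Or.inl ⟨v, hx, rfl⟩
    · exact Or.inr (Or.inl rfl)
    · exact Or.inr (Or.inr ⟨i, rfl⟩)
  have hTfin : T.Finite := Set.toFinite T
  have hTq : q ≤ T.ncard := by
    have h1 : Nat.card S = S.ncard := Nat.card_coe_set_eq S
    have h2 := Set.ncard_le_ncard hcover (Set.toFinite _)
    have h3 := Set.ncard_union_le (Sum.inl '' T) ({α} ∪ (Set.range (fun i : Fin (q + 1) =>
      (Sum.inr (Sum.inr i) : V ⊕ (Unit ⊕ Fin (q + 1))))))
    have h4 := Set.ncard_union_le ({α} : Set (V ⊕ (Unit ⊕ Fin (q + 1))))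
      (Set.range (fun i : Fin (q + 1) =>
      (Sum.inr (Sum.inr i) : V ⊕ (Unit ⊕ Fin (q + 1)))))
    have h5 : ((Sum.inl '' T) : Set (V ⊕ (Unit ⊕ Fin (q + 1)))).ncard = T.ncard :=
      Set.ncard_image_of_injective T Sum.inl_injective
    have h6 : ({α} : Set (V ⊕ (Unit ⊕ Fin (q + 1)))).ncard = 1 := Set.ncard_singleton α
    have h7 : (Set.range (fun i : Fin (q + 1) =>
        (Sum.inr (Sum.inr i) : V ⊕ (Unit ⊕ Fin (q + 1))))).ncard ≤ q + 1 := by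
      rw [← Set.image_univ]
      have := Set.ncard_image_le (f := fun i : Fin (q + 1) =>
        (Sum.inr (Sum.inr i) : V ⊕ (Unit ⊕ Fin (q + 1)))) (s := Set.univ) Set.finite_univ
      simpa [Set.ncard_univ] using this
    omega
  by_cases hα : α ∈ S
  · -- main case : T is an independent multicolored set
    have hTind : ∀ u ∈ T, ∀ v ∈ T, u ≠ v → ¬ G.Adj u v := by
      intro u hu v hv huvne hadj
      have h1 : ((Gp G q).induce S).Adj ⟨Sum.inl u, hu⟩ ⟨Sum.inl v, hv⟩ :=
        gp_adj_inl_inl.mpr hadj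
      have h2 : ((Gp G q).induce S).Adj ⟨Sum.inl v, hv⟩ ⟨α, hα⟩ := gp_adj_inl_alpha (G := G) v
      have h3 : ((Gp G q).induce S).Adj ⟨Sum.inl u, hu⟩ ⟨α, hα⟩ := gp_adj_inl_alpha (G := G) u
      exact not_isAcyclic_of_triangle h1 h2 h3 hac
    have hPinj : Set.InjOn P T := by
      intro u hu v hv h
      by_contra hne'
      exact hTind u hu v hv hne' (hclique u v h hne')
    have hTle : T.ncard ≤ q := by
      have h0 : (P '' T).ncard ≤ q := by
        have := Set.ncard_le_ncard (Set.subset_univ (P '' T)) Set.finite_univ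
        simpa [Set.ncard_univ] using this
      calc T.ncard = (P '' T).ncard := (Set.ncard_image_of_injOn hPinj).symm
        _ ≤ q := h0
    have hTeq : T.ncard = q := le_antisymm hTle hTq
    have himg : P '' T = Set.univ := by
      apply Set.eq_of_subset_of_ncard_le (Set.subset_univ _)
      rw [Set.ncard_univ, Nat.card_eq_fintype_card, Fintype.card_fin,
        Set.ncard_image_of_injOn hPinj, hTeq]
    have hsurj : ∀ i : Fin q, ∃ v, v ∈ T ∧ P v = i := by
      intro i
      have : i ∈ P '' T := by rw [himg]; trivial
      obtain ⟨v, hv, hPv⟩ := this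
      exact ⟨v, hv, hPv⟩
    choose g hgT hgP using hsurj
    refine ⟨g, hgP, ?_⟩
    intro i j hij
    have hgne : g i ≠ g j := by
      intro h
      exact hij (by rw [← hgP i, ← hgP j, h])
    exact hTind (g i) (hgT i) (g j) (hgT j) hgne
  · -- degenerate case : α ∉ S, contradiction
    exfalso
    have hSl : S ⊆ Sum.inl '' T := by
      rintro x hxS
      obtain ⟨e, heF, hxe⟩ := hxS
      have hadj := hFE heF
      induction e with
      | _ a b =>
        rw [mem_edgeSet] at hadj
        rw [Sym2.mem_iff] at hxe
        have hbS : b ∈ S := ⟨s(a, b), heF, by simp⟩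
        have haS : a ∈ S := ⟨s(a, b), heF, by simp⟩
        have key : ∀ y z : V ⊕ (Unit ⊕ Fin (q + 1)), (Gp G q).Adj y z → y ∈ S → z ∈ S →
            ∀ v', y = Sum.inl v' → y ∈ Sum.inl '' T := by
          intro y z _ hyS _ v' hy
          exact ⟨v', by rw [hy] at hyS; exact hyS, hy.symm⟩
        rcases hxe with rfl | rfl
        · cases x with
          | inl v => exact ⟨v, haS, rfl⟩
          | inr y =>
            cases y with
            | inl u => cases u; exact absurd haS hα
            | inr i => exact absurd (by rw [gp_adj_pend hadj] at hbS; exact hbS) hα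
        · cases x with
          | inl v => exact ⟨v, hbS, rfl⟩
          | inr y =>
            cases y with
            | inl u => cases u; exact absurd hbS hα
            | inr i => exact absurd (by rw [gp_adj_pend hadj.symm] at haS; exact haS) hα
    -- every colour class contains at most two vertices of T
    have hfib : ∀ i : Fin q, (T.toFinset.filter (fun v => P v = i)).card ≤ 2 := by
      intro i
      by_contra hgt
      push_neg at hgt
      obtain ⟨a, b, c, ha, hb, hc, hab, hac', hbc⟩ := Finset.two_lt_card_iff.mp hgt
      rw [Finset.mem_filter, Set.mem_toFinset] at ha hb hc
      have hAB : G.Adj a b := hclique a b (by rw [ha.2, hb.2]) hab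
      have hBC : G.Adj b c := hclique b c (by rw [hb.2, hc.2]) hbc
      have hAC : G.Adj a c := hclique a c (by rw [ha.2, hc.2]) hac'
      have t1 : ((Gp G q).induce S).Adj ⟨Sum.inl a, ha.1⟩ ⟨Sum.inl b, hb.1⟩ :=
        gp_adj_inl_inl.mpr hAB
      have t2 : ((Gp G q).induce S).Adj ⟨Sum.inl b, hb.1⟩ ⟨Sum.inl c, hc.1⟩ :=
        gp_adj_inl_inl.mpr hBC
      have t3 : ((Gp G q).induce S).Adj ⟨Sum.inl a, ha.1⟩ ⟨Sum.inl c, hc.1⟩ :=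
        gp_adj_inl_inl.mpr hAC
      exact not_isAcyclic_of_triangle t1 t2 t3 hac
    have hT2q : T.toFinset.card ≤ 2 * q := by
      rw [Finset.card_eq_sum_card_fiberwise (f := P) (t := Finset.univ)
        (fun x _ => Finset.mem_univ _)]
      calc ∑ i : Fin q, (T.toFinset.filter (fun v => P v = i)).card
          ≤ ∑ _i : Fin q, 2 := Finset.sum_le_sum (fun i _ => hfib i)
        _ = 2 * q := by simp [mul_comm]
    have hSle : S.ncard ≤ T.toFinset.card := by
      have := Set.ncard_le_ncard hSl (Set.toFinite _)
      rwa [Set.ncard_image_of_injective T Sum.inl_injective,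
        Set.ncard_eq_toFinset_card' T] at this
    have h1 : Nat.card S = S.ncard := Nat.card_coe_set_eq S
    omega


theorem stmt12 {V : Type*} [Fintype V] (G : SimpleGraph V) (q : ℕ)
    (P : V → Fin q) (hclique : ∀ u v : V, P u = P v → u ≠ v → G.Adj u v) :
    (∃ f : Fin q → V, (∀ i, P (f i) = i) ∧
      ∀ i j, i ≠ j → ¬ G.Adj (f i) (f j)) ↔
    ∃ F : Set (Sym2 (V ⊕ (Unit ⊕ Fin (q + 1)))), F ⊆ (Gp G q).edgeSet ∧
      2 * q + 1 ≤ Nat.card F ∧ ((Gp G q).induce (edgeVerts F)).IsAcyclic := by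
  constructor
  · rintro ⟨f, h1, h2⟩
    exact aux_fwd G q P f h1 h2
  · rintro ⟨F, h1, h2, h3⟩
    exact aux_bwd G q P hclique F h1 h2 h3
end
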